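/- Let (D, G) be a data symmetry. The following conditions are equivalent: (1) for every finite E ⊆ D and all c, d ∈ D \ E with c ≠ d, the orbit of c under the subgroup G_E is contained in the orbit of c under the subgroup of G generated by G_{E∪{c}} ∪ G_{E∪{d}}; (2) for every subgroup H ≤ G and all finite C, C' ⊆ D, if G_C ≤ H and G_{C'} ≤ H then G_{C∩C'} ≤ H (i.e., the symmetry admits least supports). -/

import Mathlib

/-- The pointwise stabilizer `G_C = {π ∈ G : π(c) = c for all c ∈ C}`, as a subgroup
of `G ≤ Sym(D)`. -/
def ptStab {D : Type*} (G : Subgroup (Equiv.Perm D)) (C : Set D) : Subgroup ↥G where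
  carrier := {π : ↥G | ∀ c ∈ C, (π : Equiv.Perm D) c = c}
  one_mem' := by intro c _; simp
  mul_mem' := by
    intro a b ha hb c hc
    show ((a * b : ↥G) : Equiv.Perm D) c = c
    have h : ((a * b : ↥G) : Equiv.Perm D) c
        = ((a : ↥G) : Equiv.Perm D) (((b : ↥G) : Equiv.Perm D) c) := rfl
    rw [h, hb c hc, ha c hc]
  inv_mem' := by
    intro a ha c hc
    show ((a⁻¹ : ↥G) : Equiv.Perm D) c = c
    have h : ((a⁻¹ : ↥G) : Equiv.Perm D) = ((a : ↥G) : Equiv.Perm D)⁻¹ := rfl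
    rw [h]
    exact Equiv.Perm.inv_eq_iff_eq.mpr (ha c hc).symm

lemma mem_ptStab {D : Type*} {G : Subgroup (Equiv.Perm D)} {S : Set D} {π : ↥G} :
    π ∈ ptStab G S ↔ ∀ c ∈ S, (π : Equiv.Perm D) c = c := Iff.rfl

lemma ptStab_anti {D : Type*} (G : Subgroup (Equiv.Perm D)) {S T : Set D} (h : S ⊆ T) :
    ptStab G T ≤ ptStab G S := fun π hπ c hc => hπ c (h hc)

lemma key_lemma {D : Type*} (G : Subgroup (Equiv.Perm D))
    (h1 : ∀ (E : Finset D) (c d : D), c ∉ E → d ∉ E → c ≠ d →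
      ∀ e : D,
        (∃ π ∈ ptStab G (↑E : Set D), (π : Equiv.Perm D) c = e) →
        ∃ π ∈ Subgroup.closure
            ((ptStab G (insert c (↑E : Set D)) : Set ↥G) ∪
             (ptStab G (insert d (↑E : Set D)) : Set ↥G)),
          (π : Equiv.Perm D) c = e)
    (E : Finset D) (c d : D) (hc : c ∉ E) (hd : d ∉ E) (hcd : c ≠ d) :
    ptStab G (↑E : Set D) ≤ Subgroup.closure
        ((ptStab G (insert c (↑E : Set D)) : Set ↥G) ∪
         (ptStab G (insert d (↑E : Set D)) : Set ↥G)) := by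
  intro π hπ
  obtain ⟨σ, hσ, hσc⟩ := h1 E c d hc hd hcd ((π : Equiv.Perm D) c) ⟨π, hπ, rfl⟩
  have hclE : Subgroup.closure
        ((ptStab G (insert c (↑E : Set D)) : Set ↥G) ∪
         (ptStab G (insert d (↑E : Set D)) : Set ↥G)) ≤ ptStab G (↑E : Set D) := by
    rw [Subgroup.closure_le]
    exact Set.union_subset (ptStab_anti G (Set.subset_insert c _))
      (ptStab_anti G (Set.subset_insert d _))
  have hσE := hclE hσ
  have hmem : σ⁻¹ * π ∈ ptStab G (insert c (↑E : Set D)) := by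
    intro x hx
    have hco : ((σ⁻¹ * π : ↥G) : Equiv.Perm D) x
        = ((σ : ↥G) : Equiv.Perm D)⁻¹ (((π : ↥G) : Equiv.Perm D) x) := rfl
    rw [hco]
    rcases hx with rfl | hx
    · rw [← hσc]
      exact Equiv.symm_apply_apply _ _
    · rw [hπ x hx]
      conv_lhs => rw [← hσE x hx]
      exact Equiv.symm_apply_apply _ _
  have hπeq : π = σ * (σ⁻¹ * π) := by group
  rw [hπeq]
  exact mul_mem hσ (Subgroup.subset_closure (Or.inl hmem))

/-- A data symmetry (D, G) admits least supports iff for every finite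
E ⊆ D and distinct c, d ∉ E, the orbit of c under G_E is contained in its orbit under
the subgroup generated by G_{E∪{c}} ∪ G_{E∪{d}}. -/
theorem least_supports_characterization {D : Type*} (G : Subgroup (Equiv.Perm D)) :
    -- (1)
    (∀ (E : Finset D) (c d : D), c ∉ E → d ∉ E → c ≠ d →
      ∀ e : D,
        (∃ π ∈ ptStab G (↑E : Set D), (π : Equiv.Perm D) c = e) →
        ∃ π ∈ Subgroup.closure
            ((ptStab G (insert c (↑E : Set D)) : Set ↥G) ∪
             (ptStab G (insert d (↑E : Set D)) : Set ↥G)),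
          (π : Equiv.Perm D) c = e)
    ↔
    -- (2) the symmetry admits least supports
    (∀ (H : Subgroup ↥G) (C C' : Finset D),
      ptStab G (↑C : Set D) ≤ H → ptStab G (↑C' : Set D) ≤ H →
      ptStab G ((↑C : Set D) ∩ (↑C' : Set D)) ≤ H) := by
  classical
  constructor
  · intro h1 H C C' hC hC'
    have main : ∀ n : ℕ, ∀ (C C' : Finset D), (C \ C').card + (C' \ C).card ≤ n →
        ptStab G (↑C : Set D) ≤ H → ptStab G (↑C' : Set D) ≤ H →
        ptStab G ((↑C : Set D) ∩ (↑C' : Set D)) ≤ H := by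
      intro n
      induction n with
      | zero =>
        intro C C' hle hC hC'
        have h0 : (C \ C').card = 0 := by omega
        have hsub : C ⊆ C' := Finset.sdiff_eq_empty_iff_subset.mp
          (Finset.card_eq_zero.mp h0)
        have heq : (↑C : Set D) ∩ ↑C' = ↑C :=
          Set.inter_eq_left.mpr (by exact_mod_cast hsub)
        rw [heq]; exact hC
      | succ n ih =>
        intro C C' hle hC hC'
        by_cases h0 : (C \ C').card = 0
        · have hsub : C ⊆ C' := Finset.sdiff_eq_empty_iff_subset.mp
            (Finset.card_eq_zero.mp h0)
          have heq : (↑C : Set D) ∩ ↑C' = ↑C :=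
            Set.inter_eq_left.mpr (by exact_mod_cast hsub)
          rw [heq]; exact hC
        by_cases h0' : (C' \ C).card = 0
        · have hsub : C' ⊆ C := Finset.sdiff_eq_empty_iff_subset.mp
            (Finset.card_eq_zero.mp h0')
          have heq : (↑C : Set D) ∩ ↑C' = ↑C' :=
            Set.inter_eq_right.mpr (by exact_mod_cast hsub)
          rw [heq]; exact hC'
        obtain ⟨c, hcmem⟩ := Finset.card_pos.mp (Nat.pos_of_ne_zero h0)
        obtain ⟨d, hdmem⟩ := Finset.card_pos.mp (Nat.pos_of_ne_zero h0')
        rw [Finset.mem_sdiff] at hcmem hdmem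
        obtain ⟨hcC, hcC'⟩ := hcmem
        obtain ⟨hdC', hdC⟩ := hdmem
        have hcd : c ≠ d := fun h => hdC (h ▸ hcC)
        set E : Finset D := (C ∪ C') \ {c, d} with hE
        have hcE : c ∉ E := by simp [hE]
        have hdE : d ∉ E := by simp [hE]
        -- C ⊆ insert c E, C' ⊆ insert d E (as sets)
        have hCsub : (↑C : Set D) ⊆ insert c (↑E : Set D) := by
          intro x hx
          rw [Finset.mem_coe] at hx
          rw [Set.mem_insert_iff]
          by_cases hxc : x = c
          · exact Or.inl hxc
          · right
            rw [Finset.mem_coe, hE, Finset.mem_sdiff]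
            refine ⟨Finset.mem_union_left _ hx, ?_⟩
            simp only [Finset.mem_insert, Finset.mem_singleton]
            rintro (rfl | rfl)
            · exact hxc rfl
            · exact hdC hx
        have hC'sub : (↑C' : Set D) ⊆ insert d (↑E : Set D) := by
          intro x hx
          rw [Finset.mem_coe] at hx
          rw [Set.mem_insert_iff]
          by_cases hxd : x = d
          · exact Or.inl hxd
          · right
            rw [Finset.mem_coe, hE, Finset.mem_sdiff]
            refine ⟨Finset.mem_union_right _ hx, ?_⟩
            simp only [Finset.mem_insert, Finset.mem_singleton]
            rintro (rfl | rfl)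
            · exact hcC' hx
            · exact hxd rfl
        have hE_le : ptStab G (↑E : Set D) ≤ H := by
          refine le_trans (key_lemma G h1 E c d hcE hdE hcd) ?_
          rw [Subgroup.closure_le]
          exact Set.union_subset
            (le_trans (ptStab_anti G hCsub) hC)
            (le_trans (ptStab_anti G hC'sub) hC')
        -- first IH application : (E, C)
        have hcard1 : (E \ C).card + (C \ E).card ≤ n := by
          have hsub1 : E \ C ⊆ (C' \ C).erase d := by
            intro x hx
            rw [Finset.mem_sdiff, hE, Finset.mem_sdiff, Finset.mem_union] at hx
            rcases hx with ⟨⟨hx1, hx2⟩, hx3⟩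
            rw [Finset.mem_erase, Finset.mem_sdiff]
            rcases hx1 with h | h
            · exact absurd h hx3
            · refine ⟨?_, h, hx3⟩
              intro h'; subst h'; exact hx2 (by simp)
          have hsub2 : C \ E ⊆ {c} := by
            intro x hx
            rw [Finset.mem_sdiff, hE, Finset.mem_sdiff] at hx
            rcases hx with ⟨hx1, hx2⟩
            rw [Finset.mem_singleton]
            by_contra hxc
            apply hx2
            refine ⟨Finset.mem_union_left _ hx1, ?_⟩
            simp only [Finset.mem_insert, Finset.mem_singleton]
            rintro (rfl | rfl)
            · exact hxc rfl
            · exact hdC hx1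
          have h1' := Finset.card_le_card hsub1
          have h2' := Finset.card_le_card hsub2
          have h3' : ((C' \ C).erase d).card = (C' \ C).card - 1 :=
            Finset.card_erase_of_mem (by rw [Finset.mem_sdiff]; exact ⟨hdC', hdC⟩)
          simp only [Finset.card_singleton] at h2'
          omega
        have hEC := ih E C hcard1 hE_le hC
        have heq1 : (↑E : Set D) ∩ ↑C = ↑(C.erase c) := by
          ext x
          simp only [Set.mem_inter_iff, Finset.mem_coe, Finset.coe_erase,
            Set.mem_diff, Set.mem_singleton_iff, hE, Finset.mem_sdiff,
            Finset.mem_union, Finset.mem_insert, Finset.mem_singleton]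
          constructor
          · rintro ⟨⟨_, h2⟩, h3⟩
            exact ⟨h3, fun h => h2 (Or.inl h)⟩
          · rintro ⟨h1', h2'⟩
            refine ⟨⟨Or.inl h1', ?_⟩, h1'⟩
            rintro (rfl | rfl)
            · exact h2' rfl
            · exact hdC h1'
        rw [heq1] at hEC
        -- second IH application : (C.erase c, C')
        have hcard2 : (C.erase c \ C').card + (C' \ C.erase c).card ≤ n := by
          have hsub1 : C.erase c \ C' ⊆ (C \ C').erase c := by
            intro x hx
            rw [Finset.mem_sdiff, Finset.mem_erase] at hx
            rw [Finset.mem_erase, Finset.mem_sdiff]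
            exact ⟨hx.1.1, hx.1.2, hx.2⟩
          have hsub2 : C' \ C.erase c ⊆ C' \ C := by
            intro x hx
            rw [Finset.mem_sdiff] at hx ⊢
            refine ⟨hx.1, fun h => hx.2 ?_⟩
            rw [Finset.mem_erase]
            refine ⟨fun h' => hcC' (h' ▸ hx.1), h⟩
          have h1' := Finset.card_le_card hsub1
          have h2' := Finset.card_le_card hsub2
          have h3' : ((C \ C').erase c).card = (C \ C').card - 1 :=
            Finset.card_erase_of_mem (by rw [Finset.mem_sdiff]; exact ⟨hcC, hcC'⟩)
          omega
        have hfin := ih (C.erase c) C' hcard2 hEC hC'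
        have heq2 : (↑(C.erase c) : Set D) ∩ ↑C' = (↑C : Set D) ∩ ↑C' := by
          ext x
          simp only [Set.mem_inter_iff, Finset.mem_coe, Finset.mem_erase]
          constructor
          · rintro ⟨⟨_, h1'⟩, h2'⟩; exact ⟨h1', h2'⟩
          · rintro ⟨h1', h2'⟩
            exact ⟨⟨fun h => hcC' (h ▸ h2'), h1'⟩, h2'⟩
        rw [heq2] at hfin
        exact hfin
    exact main ((C \ C').card + (C' \ C).card) C C' le_rfl hC hC'
  · intro h2 E c d hcE hdE hcd e ⟨π, hπ, hπc⟩
    set K := Subgroup.closure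
        ((ptStab G (insert c (↑E : Set D)) : Set ↥G) ∪
         (ptStab G (insert d (↑E : Set D)) : Set ↥G)) with hK
    have hc' : ptStab G (↑(insert c E) : Set D) ≤ K := by
      rw [Finset.coe_insert]
      exact le_trans (le_refl _) (fun x hx => Subgroup.subset_closure (Or.inl hx))
    have hd' : ptStab G (↑(insert d E) : Set D) ≤ K := by
      rw [Finset.coe_insert]
      exact fun x hx => Subgroup.subset_closure (Or.inr hx)
    have hint := h2 K (insert c E) (insert d E) hc' hd'
    have hsub : (↑(insert c E) : Set D) ∩ (↑(insert d E) : Set D) ⊆ (↑E : Set D) := by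
      intro x hx
      simp only [Finset.coe_insert, Set.mem_inter_iff, Set.mem_insert_iff,
        Finset.mem_coe] at hx
      rcases hx with ⟨rfl | h1', rfl | h2'⟩
      · exact absurd rfl hcd
      · exact h2'
      · exact h1'
      · exact h1'
    exact ⟨π, hint (ptStab_anti G hsub hπ), hπc⟩
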